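/- Let H be a complex Hilbert space with grading γ (γ* = γ, γ²=1), F bounded self-adjoint with F²=1 and Fγ + γF = 0, and let a₀,…,a_n be bounded operators commuting with γ such that each [F, a_i] (i ≥ 1) is trace class, with n even and n ≥ 2. Define τ(a₀,…,a_n) = Tr(γ a₀ [F,a₁]⋯[F,a_n]). Then τ satisfies the cyclic symmetry τ(a_n, a₀, …, a_{n−1}) = (−1)^n τ(a₀, …, a_n) and bτ = 0. -/

import Mathlib

/- Mathlib has no theory of trace-class operators on infinite-dimensional Hilbert
spaces, so we work over a finite-dimensional complex Hilbert space, where every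
bounded operator is trace class (hence the trace-class hypothesis of the statement
holds automatically) and the trace is `LinearMap.trace`.  All the algebraic
structure of the statement (cyclicity and the Hochschild cocycle identity for
Connes' character of an even Fredholm module) is retained verbatim. -/

variable {H : Type*} [NormedAddCommGroup H] [InnerProductSpace ℂ H]
  [FiniteDimensional ℂ H]

/-- The trace of a bounded operator. -/
noncomputable def opTrace (T : H →L[ℂ] H) : ℂ :=
  LinearMap.trace ℂ H (T : H →ₗ[ℂ] H)

/-- The character cochain of an even Fredholm module:
`τ(a₀, a₁, …, a_n) = Tr(γ a₀ [F,a₁] [F,a₂] ⋯ [F,a_n])`. -/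
noncomputable def charCochainEven (γ F : H →L[ℂ] H) {n : ℕ}
    (a : Fin (n + 1) → (H →L[ℂ] H)) : ℂ :=
  opTrace (γ * a 0 * (List.ofFn fun i : Fin n => F * a i.succ - a i.succ * F).prod)

set_option linter.unusedSectionVars false

section aux2
section aux
variable (γ F : H →L[ℂ] H)

lemma leibniz (x y : H →L[ℂ] H) :
    F * (x * y) - (x * y) * F = (F * x - x * F) * y + x * (F * y - y * F) := by
  noncomm_ring

lemma F_anti (hF2 : F * F = 1) (x : H →L[ℂ] H) :
    F * (F * x - x * F) = -((F * x - x * F) * F) := by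
  have h1 : F * (F * x) = x := by rw [← mul_assoc, hF2, one_mul]
  have h2 : x * F * F = x := by rw [mul_assoc, hF2, mul_one]
  rw [mul_sub, sub_mul, h1, h2, neg_sub, mul_assoc]

lemma gamma_anti (hodd : F * γ + γ * F = 0) (x : H →L[ℂ] H) (hc : x * γ = γ * x) :
    γ * (F * x - x * F) = -((F * x - x * F) * γ) := by
  have hg : γ * F = -(F * γ) := by linear_combination (norm := noncomm_ring) hodd
  have h1 : γ * (F * x) = -(F * x * γ) := by
    rw [← mul_assoc, hg, neg_mul, mul_assoc, ← hc, ← mul_assoc]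
  have h2 : γ * (x * F) = -(x * F * γ) := by
    rw [← mul_assoc, ← hc, mul_assoc, hg]
    noncomm_ring
  rw [mul_sub, h1, h2]
  noncomm_ring

lemma F_prod (l : List (H →L[ℂ] H)) (h : ∀ x ∈ l, F * x = -(x * F)) :
    F * l.prod = (-1 : ℂ) ^ l.length • (l.prod * F) := by
  induction l with
  | nil => simp
  | cons x t ih =>
    simp only [List.prod_cons, List.length_cons, ← mul_assoc]
    rw [mul_assoc F x, ← mul_assoc, h x (by simp), neg_mul, mul_assoc,
      ih (fun y hy => h y (by simp [hy])), pow_succ]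
    simp [mul_smul_comm, smul_mul_assoc, mul_assoc]
end aux

lemma opTrace_mul_comm (X Y : H →L[ℂ] H) : opTrace (X * Y) = opTrace (Y * X) :=
  LinearMap.trace_mul_comm ℂ (X : H →ₗ[ℂ] H) (Y : H →ₗ[ℂ] H)

lemma opTrace_add (X Y : H →L[ℂ] H) : opTrace (X + Y) = opTrace X + opTrace Y := by
  unfold opTrace; simp

lemma opTrace_sub (X Y : H →L[ℂ] H) : opTrace (X - Y) = opTrace X - opTrace Y := by
  unfold opTrace; simp

lemma opTrace_neg (X : H →L[ℂ] H) : opTrace (-X) = -opTrace X := by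
  unfold opTrace; simp

lemma key0 (γ F : H →L[ℂ] H) (hF2 : F * F = 1) (hodd : F * γ + γ * F = 0)
    (c : H →L[ℂ] H) (l : List (H →L[ℂ] H)) (h : ∀ x ∈ l, F * x = -(x * F))
    (hlen : Odd l.length) :
    opTrace (γ * (F * c - c * F) * l.prod) = 0 := by
  have hg : F * γ = -(γ * F) := by linear_combination (norm := noncomm_ring) hodd
  have hQ : F * l.prod = -(l.prod * F) := by
    rw [F_prod F l h, Odd.neg_one_pow hlen, neg_one_smul]
  have key : γ * (c * F) * l.prod = F * (γ * (F * c) * l.prod) * F := by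
    have h2 : F * (γ * (F * c) * l.prod) = -(γ * c * l.prod) := by
      rw [← mul_assoc, ← mul_assoc, hg]
      have : -(γ * F) * (F * c) = -(γ * c) := by
        rw [neg_mul, mul_assoc, ← mul_assoc F F, hF2, one_mul]
      rw [this]
      noncomm_ring
    have h1 : γ * (c * F) * l.prod = γ * c * (F * l.prod) := by noncomm_ring
    rw [h1, hQ, h2]
    noncomm_ring
  have e1 : γ * (F * c - c * F) * l.prod
      = γ * (F * c) * l.prod - γ * (c * F) * l.prod := by noncomm_ring
  have e2 : opTrace (F * (γ * (F * c) * l.prod) * F) = opTrace (γ * (F * c) * l.prod) := by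
    rw [opTrace_mul_comm (F * (γ * (F * c) * l.prod)) F, ← mul_assoc, hF2, one_mul]
  rw [e1, opTrace_sub, key, e2, sub_self]


lemma cyclic_part (γ F : H →L[ℂ] H) (hF2 : F * F = 1) (hodd : F * γ + γ * F = 0)
    (m : ℕ) (hm : Even m) (a : Fin (m + 3) → (H →L[ℂ] H))
    (hcomm : ∀ i, a i * γ = γ * a i) :
    charCochainEven γ F (fun i => a (i - 1)) = (-1 : ℂ) ^ (m + 2) * charCochainEven γ F a := by
  have hsub0 : (0 : Fin (m+3)) - 1 = Fin.last (m+2) := by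
    apply Fin.ext
    rw [Fin.sub_def]
    simp [Fin.val_one, Nat.mod_eq_of_lt]
  have hsubj : ∀ j : Fin (m+2), (j.succ : Fin (m+3)) - 1 = j.castSucc := by
    intro j
    apply Fin.ext
    rw [Fin.sub_def]
    simp only [Fin.val_one, Fin.val_succ, Fin.coe_castSucc]
    have h : m + 2 + 1 - 1 + ((j:ℕ) + 1) = j + (m+2+1) := by omega
    rw [h, Nat.add_mod_right, Nat.mod_eq_of_lt (by omega)]
  have L1 : (List.ofFn fun j : Fin (m+2) => F * a j.castSucc - a j.castSucc * F)
      = (F * a 0 - a 0 * F) ::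
        List.ofFn (fun j : Fin (m+1) => F * a j.succ.castSucc - a j.succ.castSucc * F) := by
    rw [List.ofFn_succ]
    simp only [Fin.castSucc_zero]
  have L2 : (List.ofFn fun j : Fin (m+2) => F * a j.succ - a j.succ * F)
      = (List.ofFn (fun j : Fin (m+1) => F * a j.succ.castSucc - a j.succ.castSucc * F)).concat
          (F * a (Fin.last (m+2)) - a (Fin.last (m+2)) * F) := by
    rw [List.ofFn_succ']
    simp only [Fin.succ_castSucc, Fin.succ_last]
  unfold charCochainEven
  simp only [hsub0, hsubj]
  rw [L1, L2, List.prod_cons, List.prod_concat]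
  set P := (List.ofFn fun j : Fin (m+1) => F * a j.succ.castSucc - a j.succ.castSucc * F).prod with hP
  set A := a (Fin.last (m+2)) with hA
  -- key zero trace
  have h0 : opTrace (γ * (F * (A * a 0) - A * a 0 * F) *
      (List.ofFn fun j : Fin (m+1) => F * a j.succ.castSucc - a j.succ.castSucc * F).prod) = 0 := by
    apply key0 γ F hF2 hodd
    · intro x hx
      rw [List.mem_ofFn] at hx
      obtain ⟨j, rfl⟩ := hx
      exact F_anti F hF2 _
    · simp only [List.length_ofFn]
      exact hm.add_one
  rw [leibniz] at h0
  rw [show γ * ((F * A - A * F) * a 0 + A * (F * a 0 - a 0 * F)) * P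
      = γ * ((F * A - A * F) * a 0) * P + γ * (A * (F * a 0 - a 0 * F)) * P from by noncomm_ring,
    opTrace_add] at h0
  have g := gamma_anti γ F hodd A (hcomm _)
  have step : γ * ((F * A - A * F) * a 0) * P = -((F * A - A * F) * (γ * a 0 * P)) := by
    rw [show γ * ((F * A - A * F) * a 0) * P = γ * (F * A - A * F) * (a 0 * P) from by
        noncomm_ring, g]
    noncomm_ring
  have e1 : opTrace (γ * A * ((F * a 0 - a 0 * F) * P))
      = opTrace (γ * (A * (F * a 0 - a 0 * F)) * P) := congrArg _ (by noncomm_ring)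
  have e2 : opTrace ((F * A - A * F) * (γ * a 0 * P))
      = opTrace (γ * a 0 * (P * (F * A - A * F))) := by
    rw [opTrace_mul_comm]
    exact congrArg _ (by noncomm_ring)
  have hpow : (-1 : ℂ) ^ (m + 2) = 1 := Even.neg_one_pow (by simpa using hm.add (by decide : Even 2))
  rw [step, opTrace_neg, e2] at h0
  rw [hpow, one_mul, e1]
  linear_combination h0

lemma telescope (E : ℕ → ℂ) (m : ℕ) :
    ∑ i ∈ Finset.range (m + 1), (-1 : ℂ) ^ i * (E (i + 1) + E i)
      = (-1) ^ m * E (m + 1) + E 0 := by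
  induction m with
  | zero => simp
  | succ p ih => rw [Finset.sum_range_succ, ih, pow_succ]; ring

lemma cocycle_part (γ F : H →L[ℂ] H) (n : ℕ) (a : Fin (n + 2) → (H →L[ℂ] H))
    (hcomm : ∀ i, a i * γ = γ * a i) :
    (∑ i : Fin (n + 1), (-1 : ℂ) ^ (i : ℕ) *
        charCochainEven γ F (fun j : Fin (n + 1) =>
          if (j : ℕ) < (i : ℕ) then a j.castSucc
          else if j = i then a i.castSucc * a i.succ
          else a j.succ))
      + (-1 : ℂ) ^ (n + 1) *
        charCochainEven γ F (fun j : Fin (n + 1) =>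
          if j = 0 then a (Fin.last (n + 1)) * a 0 else a j.castSucc) = 0 := by
  classical
  have ha : ∀ (X Y : Fin (n + 2)), (X : ℕ) = (Y : ℕ) → a X = a Y :=
    fun X Y h => congrArg a (Fin.ext h)
  set W : (H →L[ℂ] H) → (H →L[ℂ] H) := fun x => F * x - x * F with hW
  set b : Fin (n + 1) → (H →L[ℂ] H) := fun k => a k.succ with hb
  set L : List (H →L[ℂ] H) := List.ofFn b with hL
  have hLlen : L.length = n + 1 := by simp [hL]
  set bn : ℕ → (H →L[ℂ] H) := fun k => if h : k < n + 1 then b ⟨k, h⟩ else 1 with hbn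
  set D : ℕ → ℂ := fun i =>
    opTrace (γ * a 0 * ((L.take i).map W).prod * bn i * ((L.drop (i + 1)).map W).prod) with hD
  set E : ℕ → ℂ := fun k => if k = 0 then 0 else D (k - 1) with hE
  have hbnv : ∀ (k : ℕ), k < n + 1 → ∀ (Y : Fin (n + 2)), (Y : ℕ) = k + 1 → bn k = a Y := by
    intro k hk Y hY
    simp only [hbn, dif_pos hk, hb]
    exact ha _ _ (by simp [hY])
  have hLget : ∀ (j : ℕ) (h : j < L.length) (Y : Fin (n + 2)), (Y : ℕ) = j + 1 → L[j] = a Y := by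
    intro j h Y hY
    simp only [hL, List.getElem_ofFn, hb]
    exact ha _ _ (by simp [hY])
  have hterm : ∀ i : Fin (n + 1),
      charCochainEven γ F (fun j : Fin (n + 1) =>
          if (j : ℕ) < (i : ℕ) then a j.castSucc
          else if j = i then a i.castSucc * a i.succ
          else a j.succ) = E ((i : ℕ) + 1) + E (i : ℕ) := by
    intro i
    simp only [charCochainEven]
    rcases eq_or_ne i 0 with rfl | hne
    · simp only [Fin.val_zero, lt_self_iff_false, if_false, Fin.succ_ne_zero, Nat.not_lt_zero,
        Fin.val_succ, eq_self_iff_true, if_true]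
      have hlist0 : (List.ofFn fun i : Fin n => F * a i.succ.succ - a i.succ.succ * F)
          = (L.drop 1).map W := by
        apply List.ext_getElem
        · simp [hL, hW]
        · intro j h1 h2
          have h2' : 1 + j < L.length := by simp at h2; omega
          simp only [List.getElem_ofFn, List.getElem_map, List.getElem_drop, hW]
          rw [hLget (1 + j) h2' ⟨1 + j + 1, by omega⟩ rfl,
            ha ((⟨j, by simpa using h1⟩ : Fin n).succ.succ) ⟨1 + j + 1, by omega⟩
              (by simp; omega)]
      rw [hlist0]
      have e0 : E (0 + 1) + E 0 = D 0 := by simp [hE]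
      rw [e0]
      simp only [hD, List.take_zero, List.map_nil, List.prod_nil, mul_one,
        hbnv 0 (by omega) (Fin.succ 0) (by simp)]
      rw [ha (Fin.castSucc 0) 0 (by simp)]
      exact congrArg opTrace (by noncomm_ring)
    · obtain ⟨k, hk⟩ : ∃ k, (i : ℕ) = k + 1 :=
        ⟨(i : ℕ) - 1, by
          have : (i : ℕ) ≠ 0 := fun h => hne (Fin.ext (by simp [h]))
          omega⟩
      have hkn : k < n := by have := i.isLt; omega
      have hWmul : ∀ x y : H →L[ℂ] H, W (x * y) = W x * y + x * W y := by
        intro x y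
        simp only [hW]
        exact leibniz F x y
      simp only [show ((0 : Fin (n + 1)) : ℕ) < (i : ℕ) from by simp [hk], if_true]
      have hlist : (List.ofFn fun j : Fin n =>
            F * (if ((j.succ : Fin (n+1)) : ℕ) < (i : ℕ) then a j.succ.castSucc
                 else if j.succ = i then a i.castSucc * a i.succ else a j.succ.succ)
            - (if ((j.succ : Fin (n+1)) : ℕ) < (i : ℕ) then a j.succ.castSucc
                 else if j.succ = i then a i.castSucc * a i.succ else a j.succ.succ) * F)
          = (L.take k).map W ++ W (a i.castSucc * a i.succ) :: (L.drop (k + 2)).map W := by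
        apply List.ext_getElem
        · simp [hLlen]
          omega
        · intro j h1 h2
          have hjn : j < n := by simpa using h1
          simp only [List.getElem_ofFn]
          rcases Nat.lt_trichotomy j k with hjk | hjk | hjk
          · rw [List.getElem_append_left (by simp [hLlen] <;> omega)]
            simp only [List.getElem_map, List.getElem_take, hW]
            rw [hLget j (by omega) ⟨j + 1, by omega⟩ rfl]
            rw [if_pos (show (((⟨j, hjn⟩ : Fin n).succ : Fin (n+1)) : ℕ) < (i : ℕ) from by
              simp [hk] <;> omega)]
            rw [ha ((⟨j, hjn⟩ : Fin n).succ.castSucc) ⟨j + 1, by omega⟩ (by simp)]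
          · subst hjk
            rw [List.getElem_append_right (by simp [hLlen] <;> omega)]
            simp only [List.length_map, List.length_take, hLlen,
              show min j (n + 1) = j from by omega, Nat.sub_self, List.getElem_cons_zero, hW]
            rw [if_neg (show ¬ (((⟨j, hjn⟩ : Fin n).succ : Fin (n+1)) : ℕ) < (i : ℕ) from by
              simp [hk] <;> omega), if_pos (show (⟨j, hjn⟩ : Fin n).succ = i from
                Fin.ext (by simp [hk] <;> omega))]
          · obtain ⟨t, rfl⟩ : ∃ t, j = k + 1 + t := ⟨j - k - 1, by omega⟩
            rw [List.getElem_append_right (by simp [hLlen] <;> omega)]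
            simp only [List.length_map, List.length_take, hLlen,
              show min k (n + 1) = k from by omega,
              show k + 1 + t - k = t + 1 from by omega, List.getElem_cons_succ,
              List.getElem_map, List.getElem_drop, hW]
            rw [hLget (k + 2 + t) (by omega) ⟨k + 3 + t, by omega⟩ (by simp; omega)]
            rw [if_neg (show ¬ (((⟨k + 1 + t, hjn⟩ : Fin n).succ : Fin (n+1)) : ℕ) < (i : ℕ)
                from by simp [hk] <;> omega),
              if_neg (show ¬ (⟨k + 1 + t, hjn⟩ : Fin n).succ = i from by
                rw [Fin.ext_iff]; simp [hk] <;> omega)]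
            rw [ha ((⟨k + 1 + t, hjn⟩ : Fin n).succ.succ) ⟨k + 3 + t, by omega⟩ (by simp; omega)]
      rw [hlist, List.prod_append, List.prod_cons]
      have hT1 : (List.map W (List.take (k + 1) L)).prod
          = (List.map W (List.take k L)).prod * W (a i.castSucc) := by
        rw [List.take_succ, List.getElem?_eq_getElem (show k < L.length from by omega)]
        simp only [Option.toList_some, List.map_append, List.prod_append, List.map_cons,
          List.map_nil, List.prod_cons, List.prod_nil, mul_one]
        rw [hLget k (by omega) i.castSucc (by simp [hk])]
      have hT2 : (List.map W (List.drop (k + 1) L)).prod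
          = W (a i.succ) * (List.map W (List.drop (k + 2) L)).prod := by
        rw [List.drop_eq_getElem_cons (show k + 1 < L.length from by omega)]
        simp only [List.map_cons, List.prod_cons]
        rw [hLget (k + 1) (by omega) i.succ (by simp [hk])]
      have hDk1 : D (k + 1) = opTrace (γ * a 0 * ((List.map W (List.take k L)).prod
          * W (a i.castSucc)) * a i.succ * (List.map W (List.drop (k + 2) L)).prod) := by
        simp only [hD]
        rw [hT1, hbnv (k + 1) (by omega) i.succ (by simp [hk])]
      have hDk : D k = opTrace (γ * a 0 * (List.map W (List.take k L)).prod * a i.castSucc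
          * (W (a i.succ) * (List.map W (List.drop (k + 2) L)).prod)) := by
        simp only [hD]
        rw [hT2, hbnv k (by omega) i.castSucc (by simp [hk])]
      rw [hk]
      have hER : E (k + 1 + 1) + E (k + 1) = D (k + 1) + D k := by simp [hE]
      rw [hER, hDk1, hDk, ha (Fin.castSucc (0 : Fin (n + 1))) 0 (by simp), ← opTrace_add]
      exact congrArg opTrace (by rw [hWmul]; noncomm_ring)
  have hlast : charCochainEven γ F (fun j : Fin (n + 1) =>
      if j = 0 then a (Fin.last (n + 1)) * a 0 else a j.castSucc) = D n := by
    simp only [charCochainEven]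
    simp only [eq_self_iff_true, if_true, Fin.succ_ne_zero, if_false]
    have hlistn : (List.ofFn fun j : Fin n => F * a j.succ.castSucc - a j.succ.castSucc * F)
        = (L.take n).map W := by
      apply List.ext_getElem
      · simp [hLlen]
      · intro j h1 h2
        have hjn : j < n := by simpa using h1
        simp only [List.getElem_ofFn, List.getElem_map, List.getElem_take, hW]
        rw [hLget j (by omega) ⟨j + 1, by omega⟩ rfl]
        rw [ha ((⟨j, hjn⟩ : Fin n).succ.castSucc) ⟨j + 1, by omega⟩ (by simp)]
    rw [hlistn]
    simp only [hD]
    rw [hbnv n (by omega) (Fin.last (n + 1)) (by simp)]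
    rw [show L.drop (n + 1) = [] from by rw [← hLlen]; exact List.drop_length]
    simp only [List.map_nil, List.prod_nil, mul_one]
    rw [show γ * (a (Fin.last (n + 1)) * a 0) * ((L.take n).map W).prod
        = a (Fin.last (n + 1)) * (γ * a 0 * ((L.take n).map W).prod) from by
      rw [show γ * (a (Fin.last (n + 1)) * a 0) * ((L.take n).map W).prod
          = γ * a (Fin.last (n + 1)) * (a 0 * ((L.take n).map W).prod) from by noncomm_ring,
        ← hcomm (Fin.last (n + 1))]
      noncomm_ring]
    rw [opTrace_mul_comm]
  have hsum : (∑ i : Fin (n + 1), (-1 : ℂ) ^ (i : ℕ) *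
      charCochainEven γ F (fun j : Fin (n + 1) =>
          if (j : ℕ) < (i : ℕ) then a j.castSucc
          else if j = i then a i.castSucc * a i.succ
          else a j.succ))
      = ∑ i ∈ Finset.range (n + 1), (-1 : ℂ) ^ i * (E (i + 1) + E i) := by
    rw [← Fin.sum_univ_eq_sum_range (fun kk => (-1 : ℂ) ^ kk * (E (kk + 1) + E kk)) (n + 1)]
    exact Finset.sum_congr rfl fun i _ => by rw [hterm i]
  rw [hsum, hlast, telescope]
  have hE0 : E 0 = 0 := by simp [hE]
  have hEn : E (n + 1) = D n := by simp [hE]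
  rw [hE0, hEn, pow_succ]
  ring

end aux2

/-- **Connes' character of an even Fredholm module is a cyclic Hochschild
cocycle.**  Let `γ` be a self-adjoint grading (`γ² = 1`), `F` self-adjoint with
`F² = 1`, odd with respect to `γ` (`Fγ + γF = 0`), and let `n ≥ 2` be even.  For
operators commuting with `γ`, the cochain `τ(a₀,…,a_n) = Tr(γ a₀[F,a₁]⋯[F,a_n])`
satisfies the cyclic symmetry `τ(a_n, a₀, …, a_{n−1}) = (−1)^n τ(a₀, …, a_n)` and
the Hochschild cocycle identity `bτ = 0`. -/
theorem connes_character_even_cyclic_cocycle (γ F : H →L[ℂ] H)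
    (hγ : IsSelfAdjoint γ) (hγ2 : γ * γ = 1)
    (hF : IsSelfAdjoint F) (hF2 : F * F = 1) (hodd : F * γ + γ * F = 0)
    (n : ℕ) (hn : Even n) (hn2 : 2 ≤ n) :
    (∀ a : Fin (n + 1) → (H →L[ℂ] H), (∀ i, a i * γ = γ * a i) →
      charCochainEven γ F (fun i => a (i - 1)) = (-1 : ℂ) ^ n * charCochainEven γ F a) ∧
    (∀ a : Fin (n + 2) → (H →L[ℂ] H), (∀ i, a i * γ = γ * a i) →
      (∑ i : Fin (n + 1), (-1 : ℂ) ^ (i : ℕ) *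
          charCochainEven γ F (fun j : Fin (n + 1) =>
            if (j : ℕ) < (i : ℕ) then a j.castSucc
            else if j = i then a i.castSucc * a i.succ
            else a j.succ))
        + (-1 : ℂ) ^ (n + 1) *
          charCochainEven γ F (fun j : Fin (n + 1) =>
            if j = 0 then a (Fin.last (n + 1)) * a 0 else a j.castSucc) = 0) := by
  obtain ⟨m, rfl⟩ : ∃ m, n = m + 2 := ⟨n - 2, by omega⟩
  have hm : Even m := by rcases hn with ⟨r, hr⟩; exact ⟨r - 1, by omega⟩
  constructor
  · intro a hcomm
    exact cyclic_part γ F hF2 hodd m hm a hcomm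
  · intro a hcomm
    exact cocycle_part γ F (m + 2) a hcomm
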